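/- Fix N ≥ 1 and complex numbers c_1, …, c_N, and set c_s = 0 for s > N. Define δ_m = ∑_{s=1}^{m} C(m,s) · s! · c_s for m ∈ ℕ. For each n ∈ ℕ define P_n(x) = x^n + ∑_{i=1}^{n} (δ_n · δ_{n−1} ⋯ δ_{n−i+1} / i!) · x^{n−i}, and set P_m = 0 for m < 0. For 0 ≤ s ≤ N−1 and n ≥ s define α_{n,n−s} = (δ_n · δ_{n−1} ⋯ δ_{n−s+1} / (s+1)!) · ∑_{j=0}^{s+1} C(s+1, j) · (−1)^j · δ_{n−s+j} (with the empty product equal to 1 when s = 0). Then for every n ∈ ℕ the (N+1)-term recurrence ∑_{s=1}^{N−1} α_{n,n−s} · P_{n−s}(x) + (α_{n,n} − x) · P_n(x) + P_{n+1}(x) = 0 holds, where terms α_{n,n−s} P_{n−s} with s > n are omitted (they multiply the zero polynomial). -/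

import Mathlib

open Finset Polynomial

/-- `δ_m = ∑_{s=1}^{m} C(m,s) s! c_s` (denoted `δ_m^{(1)}` in the paper). -/
noncomputable def deltac (c : ℕ → ℂ) (m : ℕ) : ℂ :=
  ∑ s ∈ Icc 1 m, (m.choose s : ℂ) * (s.factorial : ℂ) * c s

/-- `P_n(x) = x^n + ∑_{i=1}^{n} (δ_n δ_{n-1} ⋯ δ_{n-i+1} / i!) x^{n-i}`. -/
noncomputable def Pc (c : ℕ → ℂ) (n : ℕ) : Polynomial ℂ :=
  X ^ n + ∑ i ∈ Icc 1 n, C ((∏ j ∈ range i, deltac c (n - j)) / (i.factorial : ℂ)) * X ^ (n - i)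

/-- `α_{n,n-s} = (δ_n δ_{n-1} ⋯ δ_{n-s+1} / (s+1)!) ∑_{j=0}^{s+1} C(s+1,j) (-1)^j δ_{n-s+j}`
(for `s ≤ n`, so that the indices `n - s + j` make sense). -/
noncomputable def alphac (c : ℕ → ℂ) (n s : ℕ) : ℂ :=
  ((∏ j ∈ range s, deltac c (n - j)) / ((s + 1).factorial : ℂ)) *
    ∑ j ∈ range (s + 2), ((s + 1).choose j : ℂ) * (-1) ^ j * deltac c (n - s + j)


noncomputable def Dd (b : ℕ → ℂ) (s p : ℕ) : ℂ :=
  ∑ j ∈ range (s+2), ((s+1).choose j : ℂ) * (-1)^j * b (p + j)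

lemma Dd_zero (b : ℕ → ℂ) (p : ℕ) : Dd b 0 p = b p - b (p+1) := by
  simp [Dd, Finset.sum_range_succ]
  ring

lemma Dd_succ (b : ℕ → ℂ) (s p : ℕ) :
    Dd b (s+1) p = Dd (fun q => b q - b (q+1)) s p := by
  unfold Dd
  rw [Finset.sum_range_succ' (fun j => ((s+2).choose j : ℂ) * (-1)^j * b (p + j))]
  simp only [Nat.choose_succ_succ (s+1), mul_sub]
  push_cast
  rw [Finset.sum_sub_distrib]
  have h1 : ∑ j ∈ range (s+2), ((s+1).choose j : ℂ) * (-1)^j * b (p + j)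
      = ∑ j ∈ range (s+1), ((s+1).choose (j+1) : ℂ) * (-1)^(j+1) * b (p + (j+1)) + b p := by
    rw [Finset.sum_range_succ' (fun j => ((s+1).choose j : ℂ) * (-1)^j * b (p + j))]
    simp
  rw [h1]
  have h2 : ∀ j, p + (j+1) = p + j + 1 := by intro j; ring
  simp only [h2, add_mul, Nat.succ_eq_add_one]
  rw [Finset.sum_add_distrib]
  have e1 : ∑ x ∈ range (s+2), (((s+1).choose x : ℂ)) * (-1)^(x+1) * b (p+x+1)
      = - ∑ x ∈ range (s+2), ((s+1).choose x : ℂ) * (-1)^x * b (p+x+1) := by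
    rw [← Finset.sum_neg_distrib]
    exact Finset.sum_congr rfl (by intros; ring)
  have e2 : ∑ x ∈ range (s+2), (((s+1).choose (x+1):ℂ)) * (-1)^(x+1) * b (p+x+1)
      = ∑ x ∈ range (s+1), (((s+1).choose (x+1):ℂ)) * (-1)^(x+1) * b (p+x+1) := by
    rw [Finset.sum_range_succ]
    simp [Nat.choose_succ_self]
  rw [e1, e2]
  simp
  ring

lemma gsum : ∀ (i : ℕ) (b : ℕ → ℂ) (m : ℕ),
    ∑ s ∈ range (i+1), (i.choose s : ℂ) * Dd b s (m + (i - s)) = b m - b (m+1) := by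
  intro i
  induction i with
  | zero => intro b m; simp [Dd_zero]
  | succ i ih =>
    intro b m
    rw [Finset.sum_range_succ' (fun s => (((i+1).choose s : ℕ) : ℂ) * Dd b s (m + (i+1-s)))]
    have key1 : ∑ s ∈ range (i+1), ((i.choose s : ℕ) : ℂ) * Dd b (s+1) (m + (i - s))
        = (b m - b (m+1)) - (b (m+1) - b (m+2)) := by
      simp only [Dd_succ]
      simpa using ih (fun q => b q - b (q+1)) m
    have key2 : ∑ s ∈ range (i+1), ((i.choose (s+1) : ℕ) : ℂ) * Dd b (s+1) (m + (i - s))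
        + Dd b 0 (m + (i+1))
        = b (m+1) - b (m+2) := by
      rw [← ih b (m+1)]
      rw [Finset.sum_range_succ' (fun s => ((i.choose s : ℕ) : ℂ) * Dd b s ((m+1) + (i - s)))]
      congr 1
      · rw [Finset.sum_range_succ]
        simp only [Nat.choose_succ_self, Nat.cast_zero, zero_mul, add_zero]
        apply Finset.sum_congr rfl
        intro s hs
        simp only [Finset.mem_range] at hs
        have : m + 1 + (i - (s+1)) = m + (i - s) := by omega
        rw [this]
      · have h0 : m + (i + 1) = m + 1 + i := by omega
        simp [h0]
    calc ∑ s ∈ range (i+1), (((i+1).choose (s+1) : ℕ) : ℂ) * Dd b (s+1) (m + (i+1-(s+1)))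
          + (((i+1).choose 0 : ℕ) : ℂ) * Dd b 0 (m + (i+1-0))
        = (∑ s ∈ range (i+1), ((i.choose s : ℕ) : ℂ) * Dd b (s+1) (m + (i - s)))
          + (∑ s ∈ range (i+1), ((i.choose (s+1) : ℕ) : ℂ) * Dd b (s+1) (m + (i - s))
             + Dd b 0 (m + (i+1))) := by
          simp only [Nat.choose_succ_succ i, Nat.succ_sub_succ, Nat.sub_zero, Nat.choose_zero_right,
            Nat.cast_one, one_mul, Nat.cast_add, add_mul]
          rw [Finset.sum_add_distrib]
          ring
      _ = b m - b (m+1) := by rw [key1, key2]; ring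

lemma fsum : ∀ (i : ℕ) (b : ℕ → ℂ) (m : ℕ),
    ∑ s ∈ range i, (i.choose (s+1) : ℂ) * Dd b s (m + (i - 1 - s)) = b m - b (m + i) := by
  intro i
  induction i with
  | zero => intro b m; simp
  | succ i ih =>
    intro b m
    have split : ∑ s ∈ range (i+1), (((i+1).choose (s+1) : ℕ) : ℂ) * Dd b s (m + (i+1-1-s))
        = (∑ s ∈ range (i+1), ((i.choose (s+1) : ℕ) : ℂ) * Dd b s (m + (i - s)))
          + ∑ s ∈ range (i+1), ((i.choose s : ℕ) : ℂ) * Dd b s (m + (i - s)) := by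
      rw [← Finset.sum_add_distrib]
      apply Finset.sum_congr rfl
      intro s hs
      have : i + 1 - 1 - s = i - s := by omega
      rw [this, Nat.choose_succ_succ i (s)]
      push_cast
      ring
    rw [split, gsum i b m]
    have first : ∑ s ∈ range (i+1), ((i.choose (s+1) : ℕ) : ℂ) * Dd b s (m + (i - s))
        = b (m+1) - b (m+1+i) := by
      rw [← ih b (m+1)]
      rw [Finset.sum_range_succ]
      simp only [Nat.choose_succ_self, Nat.cast_zero, zero_mul, add_zero]
      apply Finset.sum_congr rfl
      intro s hs
      simp only [Finset.mem_range] at hs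
      have : m + 1 + (i - 1 - s) = m + (i - s) := by omega
      rw [this]
    rw [first]
    have : m + (i+1) = m + 1 + i := by omega
    rw [this]
    ring

lemma choose_alt : ∀ (k : ℕ) (m t : ℕ),
    ∑ j ∈ range (k+1), ((-1:ℂ))^j * (k.choose j : ℂ) * ((m+j).choose t : ℂ)
    = (-1)^k * (if k ≤ t then ((m.choose (t-k) : ℕ) : ℂ) else 0) := by
  intro k
  induction k with
  | zero => intro m t; simp
  | succ k ih =>
    intro m t
    rw [Finset.sum_range_succ' (fun j => ((-1:ℂ))^j * ((k+1).choose j : ℂ) * ((m+j).choose t : ℂ))]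
    have split : ∑ j ∈ range (k+1), ((-1:ℂ))^(j+1) * (((k+1).choose (j+1) : ℕ) : ℂ) * ((m+(j+1)).choose t : ℂ)
        = (∑ j ∈ range (k+1), ((-1:ℂ))^(j+1) * ((k.choose j : ℕ) : ℂ) * (((m+1)+j).choose t : ℂ))
          + ∑ j ∈ range (k+1), ((-1:ℂ))^(j+1) * ((k.choose (j+1) : ℕ) : ℂ) * ((m+(j+1)).choose t : ℂ) := by
      rw [← Finset.sum_add_distrib]
      apply Finset.sum_congr rfl
      intro j hj
      rw [Nat.choose_succ_succ k j]
      have : m + (j+1) = m + 1 + j := by omega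
      rw [this]
      push_cast
      ring
    rw [split]
    have e1 : ∑ j ∈ range (k+1), ((-1:ℂ))^(j+1) * ((k.choose j : ℕ) : ℂ) * (((m+1)+j).choose t : ℂ)
        = - ((-1:ℂ)^k * (if k ≤ t then (((m+1).choose (t-k) : ℕ) : ℂ) else 0)) := by
      rw [← ih (m+1) t, ← Finset.sum_neg_distrib]
      apply Finset.sum_congr rfl
      intro j hj
      ring
    have e2 : (∑ j ∈ range (k+1), ((-1:ℂ))^(j+1) * ((k.choose (j+1) : ℕ) : ℂ) * ((m+(j+1)).choose t : ℂ))
          + ((-1:ℂ))^0 * (((k+1).choose 0 : ℕ) : ℂ) * ((m+0).choose t : ℂ)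
        = (-1:ℂ)^k * (if k ≤ t then ((m.choose (t-k) : ℕ) : ℂ) else 0) := by
      rw [← ih m t]
      rw [Finset.sum_range_succ' (fun j => ((-1:ℂ))^j * ((k.choose j : ℕ) : ℂ) * ((m+j).choose t : ℂ))]
      rw [Finset.sum_range_succ]
      simp [Nat.choose_succ_self]
    calc (∑ j ∈ range (k+1), ((-1:ℂ))^(j+1) * ((k.choose j : ℕ) : ℂ) * (((m+1)+j).choose t : ℂ))
          + (∑ j ∈ range (k+1), ((-1:ℂ))^(j+1) * ((k.choose (j+1) : ℕ) : ℂ) * ((m+(j+1)).choose t : ℂ))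
          + ((-1:ℂ))^0 * (((k+1).choose 0 : ℕ) : ℂ) * ((m+0).choose t : ℂ)
        = (-1:ℂ)^k * ((if k ≤ t then ((m.choose (t-k) : ℕ) : ℂ) else 0)
            - (if k ≤ t then (((m+1).choose (t-k) : ℕ) : ℂ) else 0)) := by
          rw [add_assoc, e2, e1]; ring
      _ = (-1)^(k+1) * (if k+1 ≤ t then ((m.choose (t-(k+1)) : ℕ) : ℂ) else 0) := by
          by_cases h : k + 1 ≤ t
          · have hk : k ≤ t := by omega
            have h1 : t - k = (t - (k+1)) + 1 := by omega
            simp only [if_pos h, if_pos hk, h1, Nat.choose_succ_succ (m) (t-(k+1))]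
            push_cast [Nat.succ_sub_succ]
            ring
          · by_cases hk : k ≤ t
            · have ht : t = k := by omega
              simp [if_pos hk, if_neg h, ht]
            · simp [if_neg h, if_neg hk]
              omega

lemma deltac_eq (N : ℕ) (c : ℕ → ℂ) (hc : ∀ s, N < s → c s = 0) (m : ℕ) :
    deltac c m = ∑ t ∈ Icc 1 N, (m.choose t : ℂ) * (t.factorial : ℂ) * c t := by
  unfold deltac
  rw [Finset.sum_subset (Finset.Icc_subset_Icc_right (by omega) :
        Icc 1 m ⊆ Icc 1 (m + N))]
  rw [Finset.sum_subset (Finset.Icc_subset_Icc_right (by omega) :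
        Icc 1 N ⊆ Icc 1 (m + N))]
  · intro x hx hnx
    simp only [Finset.mem_Icc] at hx hnx
    rw [hc x (by omega), mul_zero]
  · intro x hx hnx
    simp only [Finset.mem_Icc] at hx hnx
    rw [Nat.choose_eq_zero_of_lt (by omega)]
    simp

lemma Dd_vanish (N : ℕ) (c : ℕ → ℂ) (hc : ∀ s, N < s → c s = 0) (s p : ℕ) (hs : N ≤ s) :
    Dd (deltac c) s p = 0 := by
  unfold Dd
  calc ∑ j ∈ range (s+2), ((s+1).choose j : ℂ) * (-1)^j * deltac c (p + j)
      = ∑ j ∈ range (s+2), ∑ t ∈ Icc 1 N,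
          ((t.factorial : ℂ) * c t) * (((-1:ℂ))^j * ((s+1).choose j : ℂ) * (((p+j).choose t : ℕ) : ℂ)) := by
        apply Finset.sum_congr rfl
        intro j hj
        rw [deltac_eq N c hc, Finset.mul_sum]
        apply Finset.sum_congr rfl
        intro t ht
        ring
    _ = ∑ t ∈ Icc 1 N, ((t.factorial : ℂ) * c t) *
          ∑ j ∈ range (s+1+1), ((-1:ℂ))^j * ((s+1).choose j : ℂ) * (((p+j).choose t : ℕ) : ℂ) := by
        rw [Finset.sum_comm]
        apply Finset.sum_congr rfl
        intro t ht
        rw [Finset.mul_sum]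
    _ = 0 := by
        apply Finset.sum_eq_zero
        intro t ht
        simp only [Finset.mem_Icc] at ht
        rw [choose_alt (s+1) p t, if_neg (by omega : ¬ (s+1 ≤ t))]
        simp

lemma coeff_Pc (c : ℕ → ℂ) (n k : ℕ) :
    (Pc c n).coeff k =
      if k ≤ n then (∏ j ∈ range (n-k), deltac c (n - j)) / (((n-k).factorial : ℕ) : ℂ) else 0 := by
  unfold Pc
  rw [Polynomial.coeff_add, Polynomial.coeff_X_pow, Polynomial.finset_sum_coeff]
  simp only [Polynomial.coeff_C_mul, Polynomial.coeff_X_pow, mul_ite, mul_one, mul_zero]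
  by_cases hk : k ≤ n
  · by_cases hkn : k = n
    · subst hkn
      rw [if_pos rfl, Finset.sum_eq_zero, if_pos hk]
      · simp
      · intro i hi
        simp only [Finset.mem_Icc] at hi
        rw [if_neg (by omega)]
    · have hlt : k < n := lt_of_le_of_ne hk hkn
      rw [if_neg (by omega), if_pos hk]
      rw [Finset.sum_eq_single (n - k)]
      · rw [if_pos (by omega)]
        ring
      · intro i hi hne
        simp only [Finset.mem_Icc] at hi
        rw [if_neg (by omega)]
      · intro h
        exact absurd (Finset.mem_Icc.2 (by omega)) h
  · rw [if_neg (by omega), if_neg hk, Finset.sum_eq_zero]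
    · simp
    · intro i hi
      simp only [Finset.mem_Icc] at hi
      rw [if_neg (by omega)]

lemma alphac_eq (c : ℕ → ℂ) (n s : ℕ) :
    alphac c n s = ((∏ j ∈ range s, deltac c (n - j)) / ((s + 1).factorial : ℂ)) *
      Dd (deltac c) s (n - s) := rfl

lemma deltac_zero (c : ℕ → ℂ) : deltac c 0 = 0 := by simp [deltac]

lemma key (N : ℕ) (hN : 1 ≤ N) (c : ℕ → ℂ) (hc : ∀ s, N < s → c s = 0) (n k : ℕ) (hk : k ≤ n) :
    ∑ s ∈ Icc 1 (min (N-1) n), alphac c n s * (Pc c (n-s)).coeff k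
    + alphac c n 0 * (Pc c n).coeff k
    - (∏ j ∈ range (n+1-k), deltac c (n - j)) / (((n+1-k).factorial : ℕ) : ℂ)
    + (Pc c (n+1)).coeff k = 0 := by
  set δ := deltac c with hδ
  set M := min (N-1) n with hMdef
  have hM : M ≤ n := min_le_right _ _
  set i := n - k with hidef
  have hi1 : n + 1 - k = i + 1 := by omega
  set Q := ∏ j ∈ range i, δ (n - j) with hQ
  -- Step A : combine the `s = 0` term into the sum
  have hins : range (M+1) = insert 0 (Icc 1 M) := by
    ext x; simp [Finset.mem_range, Finset.mem_Icc]; omega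
  have comb : ∑ s ∈ range (M+1), alphac c n s * (Pc c (n-s)).coeff k
      = ∑ s ∈ Icc 1 M, alphac c n s * (Pc c (n-s)).coeff k
        + alphac c n 0 * (Pc c n).coeff k := by
    rw [hins, Finset.sum_insert (by simp), Nat.sub_zero]
    ring
  -- Step B : main transformation of the α-sum
  set L := min (M+1) (i+1) with hL
  have main : ∑ s ∈ range (M+1), alphac c n s * (Pc c (n-s)).coeff k
      = ∑ s ∈ range (i+1), (Q / (((i+1).factorial : ℕ) : ℂ))
          * (((i+1).choose (s+1) : ℂ) * Dd δ s (k + (i - s))) := by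
    have step1 : ∑ s ∈ range L, alphac c n s * (Pc c (n-s)).coeff k
        = ∑ s ∈ range (M+1), alphac c n s * (Pc c (n-s)).coeff k := by
      apply Finset.sum_subset
      · exact Finset.range_subset_range.2 (min_le_left _ _)
      · intro s hs hns
        simp only [Finset.mem_range] at hs hns
        have hsi : i + 1 ≤ s := by omega
        rw [coeff_Pc, if_neg (by omega)]
        ring
    have step2 : ∑ s ∈ range L, alphac c n s * (Pc c (n-s)).coeff k
        = ∑ s ∈ range L, (Q / (((i+1).factorial : ℕ) : ℂ))
            * (((i+1).choose (s+1) : ℂ) * Dd δ s (k + (i - s))) := by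
      apply Finset.sum_congr rfl
      intro s hs
      simp only [Finset.mem_range, hL] at hs
      have hsM : s ≤ M := by omega
      have hsi : s ≤ i := by omega
      rw [coeff_Pc, if_pos (by omega : k ≤ n - s)]
      rw [alphac_eq]
      have hpoint : n - s = k + (i - s) := by omega
      have hns : n - s - k = i - s := by omega
      rw [hns, ← hpoint]
      have hprod : (∏ j ∈ range s, δ (n - j)) * (∏ j ∈ range (i - s), δ (n - s - j)) = Q := by
        rw [hQ]
        conv_rhs => rw [show i = s + (i - s) by omega]
        rw [Finset.prod_range_add]
        congr 1
        apply Finset.prod_congr rfl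
        intro j hj
        congr 1
        omega
      have hfac : ((i+1).choose (s+1)) * (s+1).factorial * (i - s).factorial = (i+1).factorial := by
        have h := Nat.choose_mul_factorial_mul_factorial (by omega : s + 1 ≤ i + 1)
        have : i + 1 - (s + 1) = i - s := by omega
        rwa [this] at h
      have hf1 : (((s+1).factorial : ℕ) : ℂ) ≠ 0 := Nat.cast_ne_zero.2 (Nat.factorial_ne_zero _)
      have hf2 : (((i-s).factorial : ℕ) : ℂ) ≠ 0 := Nat.cast_ne_zero.2 (Nat.factorial_ne_zero _)
      have hf3 : (((i+1).factorial : ℕ) : ℂ) ≠ 0 := Nat.cast_ne_zero.2 (Nat.factorial_ne_zero _)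
      rw [← hprod]
      have hfacC : (((i+1).choose (s+1) : ℕ) : ℂ) * (((s+1).factorial : ℕ) : ℂ)
          * (((i-s).factorial : ℕ) : ℂ) = (((i+1).factorial : ℕ) : ℂ) := by
        push_cast [← hfac]; ring
      field_simp
      rw [← hfacC]
      have hprod' : n - s - k = i - s := by omega
      ring
    have step3 : ∑ s ∈ range L, (Q / (((i+1).factorial : ℕ) : ℂ))
            * (((i+1).choose (s+1) : ℂ) * Dd δ s (k + (i - s)))
        = ∑ s ∈ range (i+1), (Q / (((i+1).factorial : ℕ) : ℂ))
            * (((i+1).choose (s+1) : ℂ) * Dd δ s (k + (i - s))) := by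
      apply Finset.sum_subset
      · exact Finset.range_subset_range.2 (min_le_right _ _)
      · intro s hs hns
        simp only [Finset.mem_range] at hs hns
        have hsM : M + 1 ≤ s := by omega
        have hMN : M = N - 1 := by omega
        have hNs : N ≤ s := by omega
        rw [hδ, Dd_vanish N c hc s _ hNs]
        ring
    rw [← step1, step2, step3]
  -- Step C : conclude
  rw [← comb]
  rw [main, ← Finset.mul_sum]
  have hfs : ∑ s ∈ range (i+1), (((i+1).choose (s+1) : ℕ) : ℂ) * Dd δ s (k + (i+1-1-s))
      = δ k - δ (k + (i+1)) := fsum (i+1) δ k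
  simp only [Nat.add_sub_cancel] at hfs
  rw [hfs]
  rw [hi1]
  have hlast : (Pc c (n+1)).coeff k = Q * δ (n+1) / (((i+1).factorial : ℕ) : ℂ) := by
    rw [coeff_Pc, if_pos (by omega : k ≤ n+1)]
    have h1 : n + 1 - k = i + 1 := hi1
    rw [h1]
    congr 1
    rw [Finset.prod_range_succ' (fun j => δ (n + 1 - j))]
    simp only [Nat.sub_zero]
    congr 1
    apply Finset.prod_congr rfl
    intro j hj
    congr 1
    omega
  have hmid : (∏ j ∈ range (i+1), δ (n - j)) = Q * δ k := by
    rw [Finset.prod_range_succ]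
    congr 2
    omega
  rw [hlast, hmid]
  have hkn1 : k + (i+1) = n + 1 := by omega
  rw [hkn1]
  field_simp
  ring

theorem stmt13 (N : ℕ) (hN : 1 ≤ N) (c : ℕ → ℂ) (hc : ∀ s, N < s → c s = 0) (n : ℕ) :
    ∑ s ∈ Icc 1 (min (N - 1) n), C (alphac c n s) * Pc c (n - s) +
        (C (alphac c n 0) - X) * Pc c n + Pc c (n + 1) = 0 := by
  ext k
  simp only [Polynomial.coeff_add, Polynomial.coeff_zero, Polynomial.finset_sum_coeff,
    Polynomial.coeff_C_mul, sub_mul, Polynomial.coeff_sub]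
  by_cases hk : k ≤ n
  · have K := key N hN c hc n k hk
    have hX : (X * Pc c n).coeff k
        = (∏ j ∈ range (n+1-k), deltac c (n - j)) / (((n+1-k).factorial : ℕ) : ℂ) := by
      rcases k with _ | k'
      · rw [Polynomial.mul_coeff_zero]
        simp only [Polynomial.coeff_X_zero, zero_mul]
        rw [Finset.prod_eq_zero (Finset.mem_range.2 (by omega : n < n + 1 - 0))]
        · simp
        · rw [(by omega : n - n = 0), deltac_zero]
      · rw [Polynomial.coeff_X_mul, coeff_Pc, if_pos (by omega : k' ≤ n),
          (by omega : n - k' = n + 1 - (k' + 1))]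
    rw [hX]
    linear_combination K
  · by_cases hk1 : k = n + 1
    · subst hk1
      rw [Polynomial.coeff_X_mul,
        Finset.sum_eq_zero (fun s hs => by
          simp only [Finset.mem_Icc] at hs
          rw [coeff_Pc, if_neg (by omega)]; ring)]
      simp [coeff_Pc, hk]
    · have hk2 : n + 2 ≤ k := by omega
      obtain ⟨k', rfl⟩ : ∃ k', k = k' + 1 := ⟨k - 1, by omega⟩
      rw [Polynomial.coeff_X_mul,
        Finset.sum_eq_zero (fun s hs => by
          simp only [Finset.mem_Icc] at hs
          rw [coeff_Pc, if_neg (by omega)]; ring)]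
      have h1 : ¬ (k' + 1 ≤ n) := by omega
      have h2 : ¬ (k' ≤ n) := by omega
      have h3 : ¬ (k' + 1 ≤ n + 1) := by omega
      simp [coeff_Pc, h1, h2, h3]
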